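/- Consider the one-parameter family of discretizations of the harmonic oscillator: q' = ((1 - h²ω²(1-a)(1-b))q + hp)/Δ, p' = -(hω²(hab·p + q) - p)/Δ with Δ = 1 + h²ω²(1-a)b, viewed as a map Φ on ℝ². The map Φ preserves the canonical symplectic form dq∧dp (equivalently, the Jacobian determinant of Φ equals 1) if and only if (1 + h²ω²a(1-b))/(1 + h²ω²b(1-a)) = 1, i.e. if and only if a = b (assuming h > 0 and ω ≠ 0). -/

import Mathlib

/-- The one-parameter family of discretizations of the harmonic oscillator preserves the
canonical symplectic form (its Jacobian determinant equals `1`) if and only if `a = b`. -/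
theorem discretization_symplectic_iff (h ω a b : ℝ) (hh : 0 < h) (hω : ω ≠ 0)
    (Δ : ℝ) (hΔdef : Δ = 1 + h ^ 2 * ω ^ 2 * (1 - a) * b) (hΔ : Δ ≠ 0) :
    ((1 - h ^ 2 * ω ^ 2 * (1 - a) * (1 - b)) / Δ) * ((1 - h ^ 2 * ω ^ 2 * a * b) / Δ)
      - (h / Δ) * (-(h * ω ^ 2) / Δ) = 1 ↔ a = b := by
  subst hΔdef
  have hu : h ^ 2 * ω ^ 2 ≠ 0 := by positivity
  constructor
  · intro H
    have H2 : h ^ 2 * ω ^ 2 * (a - b) * (1 + h ^ 2 * ω ^ 2 * (1 - a) * b) = 0 := by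
      field_simp at H
      linear_combination H
    have hab : a - b = 0 := by
      by_contra hne
      exact mul_ne_zero (mul_ne_zero hu hne) hΔ H2
    linarith
  · intro H
    subst H
    field_simp
    rw [div_eq_one_iff_eq (pow_ne_zero 2 (by intro h0; apply hΔ; linear_combination h0))]
    ring
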